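/- arXiv:2208.10005 — 2 statements merged into one kernel-verified Lean document; each statement's English description precedes it below -/
import Mathlib

section
/- For all n×n complex matrices A and B, Re r(A,B) ≤ √2 ‖A‖²‖B‖². -/
open Matrix Complex BigOperators

/-- Squared Frobenius (Hilbert-Schmidt) norm: ‖X‖² = tr(X*X). -/
noncomputable def frobSq {n : ℕ} (X : Matrix (Fin n) (Fin n) ℂ) : ℝ :=
  (Matrix.trace (Xᴴ * X)).re

/-- Hilbert-Schmidt inner product ⟨X,Y⟩ = tr(X*Y). -/
noncomputable def hsInner {n : ℕ} (X Y : Matrix (Fin n) (Fin n) ℂ) : ℂ :=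
  Matrix.trace (Xᴴ * Y)

/-- f(A,B;q) = Re⟨[B,A],[B,A]_q⟩ where [X,Y]_q = XY − qYX. -/
noncomputable def fFun {n : ℕ} (A B : Matrix (Fin n) (Fin n) ℂ) (q : ℝ) : ℝ :=
  (hsInner (B * A - A * B) (B * A - (q : ℂ) • (A * B))).re

/-- r(A,B) = (1/2)(⟨[B,A],BA⟩ + ⟨[B,A*],BA*⟩). -/
noncomputable def rFun {n : ℕ} (A B : Matrix (Fin n) (Fin n) ℂ) : ℂ :=
  (1/2 : ℂ) * (hsInner (B * A - A * B) (B * A) + hsInner (B * Aᴴ - Aᴴ * B) (B * Aᴴ))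

/-- c(q) = ((1+q) + √(2(1+q²)))/2. -/
noncomputable def cq (q : ℝ) : ℝ := ((1 + q) + Real.sqrt (2 * (1 + q ^ 2))) / 2

-- scalar key lemma
lemma scalar_key (s t : ℝ) : t^2 - s*t ≤ Real.sqrt 2 * (s^2 + t^2) := by
  have h : t^2 - s*t ≤ (13/10) * (s^2+t^2) := by nlinarith [sq_nonneg (s+t), sq_nonneg (2*s+t), sq_nonneg (s+2*t)]
  have h2 : (13/10:ℝ) ≤ Real.sqrt 2 := by
    nlinarith [Real.sq_sqrt (show (0:ℝ) ≤ 2 by norm_num), Real.sqrt_nonneg 2]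
  nlinarith [sq_nonneg s, sq_nonneg t]

lemma sum_key {n : ℕ} (d : Fin n → ℝ) (c : Fin n → Fin n → ℝ) (hc : ∀ i j, 0 ≤ c i j) :
    (∑ i, ∑ j, (d j ^ 2 - d i * d j) * c i j) ≤
      Real.sqrt 2 * (∑ k, d k ^ 2) * (∑ i, ∑ j, c i j) := by
  have hS : ∀ i j : Fin n, d j ^ 2 - d i * d j ≤ Real.sqrt 2 * (∑ k, d k ^ 2) := by
    intro i j
    rcases eq_or_ne i j with rfl | hij
    · have : (0:ℝ) ≤ Real.sqrt 2 * (∑ k, d k ^ 2) := by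
        positivity
      nlinarith
    · have h1 : d i ^ 2 + d j ^ 2 ≤ ∑ k, d k ^ 2 := by
        have h2 := Finset.sum_le_sum_of_subset_of_nonneg (Finset.subset_univ ({i,j} : Finset (Fin n))) (fun k _ _ => sq_nonneg (d k))
        rwa [Finset.sum_pair hij] at h2
      have := scalar_key (d i) (d j)
      nlinarith [Real.sqrt_nonneg 2]
  calc (∑ i, ∑ j, (d j ^ 2 - d i * d j) * c i j)
      ≤ ∑ i, ∑ j, (Real.sqrt 2 * (∑ k, d k ^ 2)) * c i j := by
        refine Finset.sum_le_sum fun i _ => Finset.sum_le_sum fun j _ => ?_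
        exact mul_le_mul_of_nonneg_right (hS i j) (hc i j)
    _ = Real.sqrt 2 * (∑ k, d k ^ 2) * (∑ i, ∑ j, c i j) := by
        simp [Finset.mul_sum]

lemma trace_diagonal_mul' {n : ℕ} (f : Fin n → ℂ) (M : Matrix (Fin n) (Fin n) ℂ) :
    Matrix.trace (Matrix.diagonal f * M) = ∑ x, f x * M x x := by
  simp [Matrix.trace, Matrix.diag, Matrix.diagonal_mul]


lemma herm_key {n : ℕ} (B X : Matrix (Fin n) (Fin n) ℂ) (hX : X.IsHermitian) :
    (Matrix.trace (X * Bᴴ * B * X) - Matrix.trace (Bᴴ * X * B * X)).re ≤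
      Real.sqrt 2 * frobSq X * frobSq B := by
  set U : Matrix (Fin n) (Fin n) ℂ := (hX.eigenvectorUnitary : Matrix (Fin n) (Fin n) ℂ) with hU
  set d : Fin n → ℝ := hX.eigenvalues with hd
  set D : Matrix (Fin n) (Fin n) ℂ := Matrix.diagonal (fun i => (d i : ℂ)) with hD
  set C : Matrix (Fin n) (Fin n) ℂ := Uᴴ * B * U with hC
  have hU2 : Uᴴ * U = 1 := by
    have := hX.eigenvectorUnitary.2
    rw [Matrix.mem_unitaryGroup_iff'] at this
    simpa [Matrix.star_eq_conjTranspose] using this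
  have hU1 : U * Uᴴ = 1 := by
    have := hX.eigenvectorUnitary.2
    rw [Matrix.mem_unitaryGroup_iff] at this
    simpa [Matrix.star_eq_conjTranspose] using this
  have cancel1 : ∀ M : Matrix (Fin n) (Fin n) ℂ, Uᴴ * (U * M) = M := by
    intro M; rw [← Matrix.mul_assoc, hU2, Matrix.one_mul]
  have cancel2 : ∀ M : Matrix (Fin n) (Fin n) ℂ, U * (Uᴴ * M) = M := by
    intro M; rw [← Matrix.mul_assoc, hU1, Matrix.one_mul]
  have hspec : X = U * D * Uᴴ := by
    have := hX.spectral_theorem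
    simpa [Matrix.star_eq_conjTranspose, hD, hd, hU, Function.comp_def] using this
  have hCH : Cᴴ = Uᴴ * Bᴴ * U := by
    simp [hC, Matrix.conjTranspose_mul, Matrix.mul_assoc]
  have e1 : Matrix.trace (X * Bᴴ * B * X) = Matrix.trace (D * Cᴴ * C * D) := by
    rw [hspec]
    rw [show (U*D*Uᴴ) * Bᴴ * B * (U*D*Uᴴ) = ((U*D*Uᴴ) * Bᴴ * B * (U*D)) * Uᴴ by
      simp [Matrix.mul_assoc]]
    rw [Matrix.trace_mul_comm]
    congr 1
    simp [hCH, hC, Matrix.mul_assoc, cancel1, cancel2]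
  have e2 : Matrix.trace (Bᴴ * X * B * X) = Matrix.trace (Cᴴ * D * C * D) := by
    rw [hspec]
    rw [show Bᴴ * (U*D*Uᴴ) * B * (U*D*Uᴴ) = (Bᴴ * (U*D*Uᴴ) * B * (U*D)) * Uᴴ by
      simp [Matrix.mul_assoc]]
    rw [Matrix.trace_mul_comm]
    congr 1
    simp [hCH, hC, Matrix.mul_assoc, cancel1, cancel2]
  have e3 : frobSq X = ∑ i, d i ^ 2 := by
    rw [frobSq, show Xᴴ = X from hX, hspec]
    rw [show (U*D*Uᴴ) * (U*D*Uᴴ) = ((U*D*Uᴴ) * (U*D)) * Uᴴ by simp [Matrix.mul_assoc]]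
    rw [Matrix.trace_mul_comm]
    rw [show Uᴴ * ((U*D*Uᴴ) * (U*D)) = D * D by simp [Matrix.mul_assoc, cancel1, cancel2]]
    simp [hD, Matrix.diagonal_mul_diagonal, Matrix.trace_diagonal, sq]
  have e4 : frobSq B = ∑ i, ∑ j, Complex.normSq (C i j) := by
    have h1 : Matrix.trace (Bᴴ * B) = Matrix.trace (Cᴴ * C) := by
      rw [show Bᴴ * B = (Bᴴ * B * U) * Uᴴ by
        rw [Matrix.mul_assoc, hU1, Matrix.mul_one]]
      rw [Matrix.trace_mul_comm]
      congr 1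
      simp [hCH, hC, Matrix.mul_assoc, cancel1, cancel2]
    rw [frobSq, h1]
    simp only [Matrix.trace, Matrix.diag, Matrix.mul_apply, Matrix.conjTranspose_apply]
    rw [Complex.re_sum]
    rw [Finset.sum_comm]
    refine Finset.sum_congr rfl fun i _ => ?_
    rw [Complex.re_sum]
    refine Finset.sum_congr rfl fun j _ => ?_
    simp [Complex.star_def, Complex.normSq_apply]; try ring
  have e5 : (Matrix.trace (D * Cᴴ * C * D)).re = ∑ i, ∑ j, d j ^ 2 * Complex.normSq (C i j) := by
    rw [Matrix.trace_mul_comm]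
    rw [show D * (D * Cᴴ * C) = (D * D) * (Cᴴ * C) by simp [Matrix.mul_assoc]]
    rw [hD, Matrix.diagonal_mul_diagonal, trace_diagonal_mul']
    rw [Complex.re_sum]
    rw [Finset.sum_comm]
    refine Finset.sum_congr rfl fun x _ => ?_
    rw [Matrix.mul_apply, Finset.mul_sum, Complex.re_sum]
    refine Finset.sum_congr rfl fun i _ => ?_
    rw [Matrix.conjTranspose_apply, Complex.star_def, ← Complex.normSq_eq_conj_mul_self,
      ← Complex.ofReal_mul, ← Complex.ofReal_mul, Complex.ofReal_re]
    ring
  have e6 : (Matrix.trace (Cᴴ * D * C * D)).re = ∑ i, ∑ j, (d i * d j) * Complex.normSq (C i j) := by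
    rw [Matrix.trace_mul_comm]
    rw [show D * (Cᴴ * D * C)
        = Matrix.diagonal (fun i => (d i : ℂ)) * (Cᴴ * (Matrix.diagonal (fun i => (d i : ℂ)) * C)) by
      simp [hD, Matrix.mul_assoc]]
    rw [trace_diagonal_mul', Complex.re_sum, Finset.sum_comm]
    refine Finset.sum_congr rfl fun x _ => ?_
    rw [Matrix.mul_apply, Finset.mul_sum, Complex.re_sum]
    refine Finset.sum_congr rfl fun i _ => ?_
    rw [Matrix.conjTranspose_apply, Matrix.diagonal_mul, Complex.star_def]
    rw [show (starRingEnd ℂ) (C i x) * ((d i : ℂ) * C i x)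
        = (d i : ℂ) * ((starRingEnd ℂ) (C i x) * C i x) by ring]
    rw [← Complex.normSq_eq_conj_mul_self, ← Complex.ofReal_mul, ← Complex.ofReal_mul,
      Complex.ofReal_re]
    ring
  rw [e1, e2, Complex.sub_re, e5, e6, e3, e4]
  have hcomb : (∑ i, ∑ j, d j ^ 2 * Complex.normSq (C i j))
      - (∑ i, ∑ j, (d i * d j) * Complex.normSq (C i j))
      = ∑ i, ∑ j, (d j ^ 2 - d i * d j) * Complex.normSq (C i j) := by
    rw [← Finset.sum_sub_distrib]
    refine Finset.sum_congr rfl fun i _ => ?_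
    rw [← Finset.sum_sub_distrib]
    refine Finset.sum_congr rfl fun j _ => ?_
    ring
  rw [hcomb]
  exact sum_key d (fun i j => Complex.normSq (C i j)) (fun i j => Complex.normSq_nonneg _)

lemma decomp {n : ℕ} (A B H K : Matrix (Fin n) (Fin n) ℂ)
    (h1 : A = H + Complex.I • K) (h2 : Aᴴ = H - Complex.I • K)
    (hH : Hᴴ = H) (hK : Kᴴ = K) :
    rFun A B = (Matrix.trace (H * Bᴴ * B * H) - Matrix.trace (Bᴴ * H * B * H))
      + (Matrix.trace (K * Bᴴ * B * K) - Matrix.trace (Bᴴ * K * B * K)) := by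
  rw [rFun, hsInner, hsInner, h2, h1]
  simp only [Matrix.conjTranspose_sub, Matrix.conjTranspose_mul, Matrix.conjTranspose_add,
    Matrix.conjTranspose_smul, hH, hK, Complex.star_def, Complex.conj_I,
    Matrix.mul_add, Matrix.add_mul, Matrix.mul_sub, Matrix.sub_mul,
    smul_mul_assoc, mul_smul_comm, smul_smul, neg_smul, smul_add, smul_sub, smul_neg,
    Matrix.neg_mul, Matrix.mul_neg, neg_neg,
    Matrix.trace_add, Matrix.trace_sub, Matrix.trace_smul, Matrix.mul_assoc, Matrix.trace_neg,
    smul_eq_mul, Complex.I_mul_I]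
  ring

lemma frob_decomp {n : ℕ} (A H K : Matrix (Fin n) (Fin n) ℂ)
    (h1 : A = H + Complex.I • K) (h2 : Aᴴ = H - Complex.I • K)
    (hH : Hᴴ = H) (hK : Kᴴ = K) :
    frobSq A = frobSq H + frobSq K := by
  rw [frobSq, frobSq, frobSq, h2, h1, hH, hK]
  have tc : Matrix.trace (K * H) = Matrix.trace (H * K) := Matrix.trace_mul_comm K H
  simp only [Matrix.mul_add, Matrix.add_mul, Matrix.mul_sub, Matrix.sub_mul,
    smul_mul_assoc, mul_smul_comm, smul_smul, neg_smul, smul_neg,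
    Matrix.trace_add, Matrix.trace_sub, Matrix.trace_smul, Matrix.trace_neg,
    smul_eq_mul, Complex.I_mul_I, tc]
  ring_nf
  try simp [Complex.add_re, Complex.sub_re]
  try ring

theorem r_loose_bound (n : ℕ) (A B : Matrix (Fin n) (Fin n) ℂ) :
    (rFun A B).re ≤ Real.sqrt 2 * frobSq A * frobSq B := by
  set H : Matrix (Fin n) (Fin n) ℂ := (1/2 : ℂ) • (A + Aᴴ) with hHdef
  set K : Matrix (Fin n) (Fin n) ℂ := (-(Complex.I)/2) • (A - Aᴴ) with hKdef
  have hH : Hᴴ = H := by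
    rw [hHdef]
    simp [Matrix.conjTranspose_smul, Matrix.conjTranspose_add, add_comm]
  have hK : Kᴴ = K := by
    have hstar : star (-Complex.I/2) = Complex.I/2 := by simp
    rw [hKdef, Matrix.conjTranspose_smul, hstar, Matrix.conjTranspose_sub,
      Matrix.conjTranspose_conjTranspose, ← neg_sub A Aᴴ, smul_neg, ← neg_smul, neg_div]
  have hc : Complex.I • ((-Complex.I/2 : ℂ) • (A - Aᴴ)) = (1/2 : ℂ) • (A - Aᴴ) := by
    rw [smul_smul, show Complex.I * (-Complex.I/2) = -(Complex.I^2)/2 by ring, Complex.I_sq]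
    norm_num
  have h1 : A = H + Complex.I • K := by
    rw [hHdef, hKdef, hc]
    module
  have h2 : Aᴴ = H - Complex.I • K := by
    rw [hHdef, hKdef, hc]
    module
  rw [decomp A B H K h1 h2 hH hK, Complex.add_re,
    frob_decomp A H K h1 h2 hH hK]
  have b1 := herm_key B H hH
  have b2 := herm_key B K hK
  have e1 : Real.sqrt 2 * (frobSq H + frobSq K) * frobSq B
      = Real.sqrt 2 * frobSq H * frobSq B + Real.sqrt 2 * frobSq K * frobSq B := by ring
  simp only [Complex.add_re, Complex.sub_re] at b1 b2 ⊢
  linarith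
end

section
/- For all n×n complex matrices A, B and all q ∈ ℝ, c(q)‖A‖²‖B‖² − f(A,B;q) equals c Σ_{D₄}|a_{ij}|²|b_{kℓ}|² + (c−1)Σ_{D₂}|a_{ij}|²|b_{kℓ}|² + (c−q)Σ_{D₃}|a_{ij}|²|b_{kℓ}|² + (c−1−q)Σ_{D₁}|a_{ij}|²|b_{kℓ}|² − Σ_{i≠k} a_{ij}·conj(a_{kj})·b_{ℓi}·conj(b_{ℓk}) − q Σ_{j≠ℓ} a_{ij}·conj(a_{iℓ})·b_{jk}·conj(b_{ℓk}) + (1+q) Σ_{(i,j,k,ℓ) ≠ (i,i,i,i)} Re(a_{ij}·conj(a_{ℓk})·b_{jk}·conj(b_{iℓ})), where c = c(q). -/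
open Matrix Complex BigOperators

/-- Membership in D₁ = {(i,j,j,i) : i ≠ j}. -/
def inD1 {n : ℕ} (i j k l : Fin n) : Prop := j = k ∧ l = i ∧ i ≠ j

/-- Membership in D₂ = {(i,j,k,i) : j ≠ k}. -/
def inD2 {n : ℕ} (i j k l : Fin n) : Prop := l = i ∧ j ≠ k

/-- Membership in D₃ = {(i,j,j,k) : i ≠ k}. -/
def inD3 {n : ℕ} (i j k l : Fin n) : Prop := j = k ∧ i ≠ l

/-- Membership in D₄, the complement of D₁ ∪ D₂ ∪ D₃. -/
def inD4 {n : ℕ} (i j k l : Fin n) : Prop :=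
  ¬ inD1 i j k l ∧ ¬ inD2 i j k l ∧ ¬ inD3 i j k l

/-- Membership in D₀ = {(i,i,i,i)}. -/
def inD0 {n : ℕ} (i j k l : Fin n) : Prop := i = j ∧ j = k ∧ k = l

section Helpers

variable {n : ℕ} {M : Type*} [AddCommMonoid M]

lemma hsInner_entries (X Y : Matrix (Fin n) (Fin n) ℂ) :
    hsInner X Y = ∑ p : Fin n, ∑ r : Fin n, (starRingEnd ℂ) (X r p) * Y r p := by
  simp [hsInner, Matrix.trace, Matrix.mul_apply, Matrix.conjTranspose_apply, Matrix.diag,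
    Complex.star_def]

lemma hsInner_conj (X Y : Matrix (Fin n) (Fin n) ℂ) :
    (starRingEnd ℂ) (hsInner X Y) = hsInner Y X := by
  simp [hsInner_entries, map_sum, _root_.map_mul, mul_comm]

lemma hsInner_sub_left (X Y Z : Matrix (Fin n) (Fin n) ℂ) :
    hsInner (X - Y) Z = hsInner X Z - hsInner Y Z := by
  simp [hsInner_entries, Matrix.sub_apply, sub_mul, Finset.sum_sub_distrib]

lemma hsInner_sub_right (X Y Z : Matrix (Fin n) (Fin n) ℂ) :
    hsInner X (Y - Z) = hsInner X Y - hsInner X Z := by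
  simp [hsInner_entries, Matrix.sub_apply, mul_sub, Finset.sum_sub_distrib]

lemma hsInner_smul_right (c : ℂ) (X Y : Matrix (Fin n) (Fin n) ℂ) :
    hsInner X (c • Y) = c * hsInner X Y := by
  simp [hsInner_entries, Matrix.smul_apply, Finset.mul_sum]; ring_nf
  exact Finset.sum_congr rfl fun p _ => Finset.sum_congr rfl fun r _ => by ring

lemma hsInner_mul (X Y Z W : Matrix (Fin n) (Fin n) ℂ) :
    hsInner (X * Y) (Z * W) = ∑ r : Fin n, ∑ p : Fin n, ∑ s : Fin n, ∑ t : Fin n,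
      (starRingEnd ℂ) (X r s) * (starRingEnd ℂ) (Y s p) * (Z r t * W t p) := by
  rw [hsInner_entries, Finset.sum_comm]
  refine Finset.sum_congr rfl fun r _ => Finset.sum_congr rfl fun p _ => ?_
  rw [Matrix.mul_apply, Matrix.mul_apply, map_sum, Finset.sum_mul_sum]
  exact Finset.sum_congr rfl fun s _ => Finset.sum_congr rfl fun t _ => by
    rw [_root_.map_mul]

lemma sum4_nest (g : Fin n → Fin n → Fin n → Fin n → M) :
    (∑ i, ∑ j, ∑ k, ∑ l, g i j k l)
      = ∑ x : Fin n × Fin n × Fin n × Fin n, g x.1 x.2.1 x.2.2.1 x.2.2.2 := by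
  simp only [Fintype.sum_prod_type]

lemma sum4_swap14 (g : Fin n → Fin n → Fin n → Fin n → M) :
    (∑ i, ∑ j, ∑ k, ∑ l, g i j k l) = ∑ i, ∑ j, ∑ k, ∑ l, g l j k i := by
  rw [sum4_nest, sum4_nest]
  exact (Equiv.sum_comp ⟨fun x => (x.2.2.2, x.2.1, x.2.2.1, x.1),
    fun x => (x.2.2.2, x.2.1, x.2.2.1, x.1),
    by rintro ⟨a, b, c, d⟩; rfl, by rintro ⟨a, b, c, d⟩; rfl⟩
    (fun x => g x.1 x.2.1 x.2.2.1 x.2.2.2)).symm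

lemma sum4_cycle (g : Fin n → Fin n → Fin n → Fin n → M) :
    (∑ i, ∑ j, ∑ k, ∑ l, g i j k l) = ∑ i, ∑ j, ∑ k, ∑ l, g i k l j := by
  rw [sum4_nest, sum4_nest]
  exact (Equiv.sum_comp ⟨fun x => (x.1, x.2.2.1, x.2.2.2, x.2.1),
    fun x => (x.1, x.2.2.2, x.2.1, x.2.2.1),
    by rintro ⟨a, b, c, d⟩; rfl, by rintro ⟨a, b, c, d⟩; rfl⟩
    (fun x => g x.1 x.2.1 x.2.2.1 x.2.2.2)).symm

lemma sum4_swap23 (g : Fin n → Fin n → Fin n → Fin n → M) :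
    (∑ i, ∑ j, ∑ k, ∑ l, g i j k l) = ∑ i, ∑ j, ∑ k, ∑ l, g i k j l := by
  rw [sum4_nest, sum4_nest]
  exact (Equiv.sum_comp ⟨fun x => (x.1, x.2.2.1, x.2.1, x.2.2.2),
    fun x => (x.1, x.2.2.1, x.2.1, x.2.2.2),
    by rintro ⟨a, b, c, d⟩; rfl, by rintro ⟨a, b, c, d⟩; rfl⟩
    (fun x => g x.1 x.2.1 x.2.2.1 x.2.2.2)).symm

lemma sum4_swap34 (g : Fin n → Fin n → Fin n → Fin n → M) :
    (∑ i, ∑ j, ∑ k, ∑ l, g i j k l) = ∑ i, ∑ j, ∑ k, ∑ l, g i j l k :=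
  Finset.sum_congr rfl fun _ _ => Finset.sum_congr rfl fun _ _ => Finset.sum_comm

lemma sum4_congr {g h : Fin n → Fin n → Fin n → Fin n → M}
    (H : ∀ i j k l, g i j k l = h i j k l) :
    (∑ i, ∑ j, ∑ k, ∑ l, g i j k l) = ∑ i, ∑ j, ∑ k, ∑ l, h i j k l :=
  Finset.sum_congr rfl fun i _ => Finset.sum_congr rfl fun j _ =>
    Finset.sum_congr rfl fun k _ => Finset.sum_congr rfl fun l _ => H i j k l

lemma frobSq_cast {n : ℕ} (a : Matrix (Fin n) (Fin n) ℂ) :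
    ((frobSq a : ℝ) : ℂ) = ∑ i : Fin n, ∑ j : Fin n, ((Complex.normSq (a i j) : ℝ) : ℂ) := by
  have h1 : hsInner a a = ∑ p : Fin n, ∑ r : Fin n, ((Complex.normSq (a r p) : ℝ) : ℂ) := by
    rw [hsInner_entries]
    exact Finset.sum_congr rfl fun p _ => Finset.sum_congr rfl fun r _ => by
      rw [mul_comm, Complex.mul_conj]
  have h2 : frobSq a = ((∑ p : Fin n, ∑ r : Fin n, ((Complex.normSq (a r p) : ℝ) : ℂ)).re) := by
    rw [← h1]; rfl
  rw [h2, Finset.sum_comm]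
  push_cast [Complex.re_sum]
  exact Finset.sum_congr rfl fun i _ => Finset.sum_congr rfl fun j _ => by simp


lemma sum4_swap_pairs {n : ℕ} {M : Type*} [AddCommMonoid M] (g : Fin n → Fin n → Fin n → Fin n → M) :
    (∑ i, ∑ j, ∑ k, ∑ l, g i j k l) = ∑ i, ∑ j, ∑ k, ∑ l, g k l i j := by
  rw [sum4_nest, sum4_nest]
  exact (Equiv.sum_comp ⟨fun x => (x.2.2.1, x.2.2.2, x.1, x.2.1),
    fun x => (x.2.2.1, x.2.2.2, x.1, x.2.1),
    by rintro ⟨a, b, c, d⟩; rfl, by rintro ⟨a, b, c, d⟩; rfl⟩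
    (fun x => g x.1 x.2.1 x.2.2.1 x.2.2.2)).symm

end Helpers

open Classical in
private lemma pt4 {n : ℕ} (a b : Matrix (Fin n) (Fin n) ℂ) : ∀ i j k l : Fin n,
    (if inD2 i j k l then ((Complex.normSq (a i j) : ℝ) : ℂ) * ((Complex.normSq (b k l) : ℝ) : ℂ) else 0)
    = (if l = i then ((Complex.normSq (a i j) : ℝ) : ℂ) * ((Complex.normSq (b k i) : ℝ) : ℂ) else 0)
      - (if j = k ∧ i = l then ((Complex.normSq (a i j) : ℝ) : ℂ) * ((Complex.normSq (b k l) : ℝ) : ℂ) else 0) := by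
  intro i j k l
  by_cases e1 : l = i <;> by_cases e2 : j = k <;> simp_all [inD2, eq_comm] <;> ring

open Classical in
private lemma pt5 {n : ℕ} (a b : Matrix (Fin n) (Fin n) ℂ) : ∀ i j k l : Fin n,
    (if inD3 i j k l then ((Complex.normSq (a i j) : ℝ) : ℂ) * ((Complex.normSq (b k l) : ℝ) : ℂ) else 0)
    = (if k = j then ((Complex.normSq (a i j) : ℝ) : ℂ) * ((Complex.normSq (b j l) : ℝ) : ℂ) else 0)
      - (if j = k ∧ i = l then ((Complex.normSq (a i j) : ℝ) : ℂ) * ((Complex.normSq (b k l) : ℝ) : ℂ) else 0) := by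
  intro i j k l
  by_cases e1 : j = k <;> by_cases e2 : i = l <;> simp_all [inD3, eq_comm] <;> ring

open Classical in
private lemma pt6 {n : ℕ} (a b : Matrix (Fin n) (Fin n) ℂ) : ∀ i j k l : Fin n,
    (if inD1 i j k l then ((Complex.normSq (a i j) : ℝ) : ℂ) * ((Complex.normSq (b k l) : ℝ) : ℂ) else 0)
    = (if j = k ∧ i = l then ((Complex.normSq (a i j) : ℝ) : ℂ) * ((Complex.normSq (b k l) : ℝ) : ℂ) else 0)
      - (if inD0 i j k l then ((Complex.normSq (a i j) : ℝ) : ℂ) * ((Complex.normSq (b k l) : ℝ) : ℂ) else 0) := by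
  intro i j k l
  by_cases e1 : j = k <;> by_cases e2 : i = l <;> by_cases e3 : i = j <;>
    simp_all [inD1, inD0, eq_comm] <;> ring

set_option maxHeartbeats 1000000 in
open Classical in
theorem key_decomposition (n : ℕ) (a b : Matrix (Fin n) (Fin n) ℂ) (q : ℝ) :
    ((cq q * frobSq a * frobSq b - fFun a b q : ℝ) : ℂ)
    = ((cq q : ℝ) : ℂ) * (∑ i : Fin n, ∑ j : Fin n, ∑ k : Fin n, ∑ l : Fin n,
        if inD4 i j k l then ((Complex.normSq (a i j) * Complex.normSq (b k l) : ℝ) : ℂ) else 0)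
      + ((cq q - 1 : ℝ) : ℂ) * (∑ i : Fin n, ∑ j : Fin n, ∑ k : Fin n, ∑ l : Fin n,
          if inD2 i j k l then ((Complex.normSq (a i j) * Complex.normSq (b k l) : ℝ) : ℂ) else 0)
      + ((cq q - q : ℝ) : ℂ) * (∑ i : Fin n, ∑ j : Fin n, ∑ k : Fin n, ∑ l : Fin n,
          if inD3 i j k l then ((Complex.normSq (a i j) * Complex.normSq (b k l) : ℝ) : ℂ) else 0)
      + ((cq q - 1 - q : ℝ) : ℂ) * (∑ i : Fin n, ∑ j : Fin n, ∑ k : Fin n, ∑ l : Fin n,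
          if inD1 i j k l then ((Complex.normSq (a i j) * Complex.normSq (b k l) : ℝ) : ℂ) else 0)
      - (∑ i : Fin n, ∑ j : Fin n, ∑ k : Fin n, ∑ l : Fin n,
          if i ≠ k then a i j * starRingEnd ℂ (a k j) * b l i * starRingEnd ℂ (b l k) else 0)
      - ((q : ℝ) : ℂ) * (∑ i : Fin n, ∑ j : Fin n, ∑ k : Fin n, ∑ l : Fin n,
          if j ≠ l then a i j * starRingEnd ℂ (a i l) * b j k * starRingEnd ℂ (b l k) else 0)
      + ((1 + q : ℝ) : ℂ) * (∑ i : Fin n, ∑ j : Fin n, ∑ k : Fin n, ∑ l : Fin n,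
          if ¬ inD0 i j k l then
            (((a i j * starRingEnd ℂ (a l k) * b j k * starRingEnd ℂ (b i l)).re : ℝ) : ℂ)
          else 0) := by
  classical
  push_cast
  have hre : ∀ z : ℂ, ((z.re : ℝ) : ℂ) = (z + (starRingEnd ℂ) z) / 2 := fun z => by
    rw [Complex.add_conj]; push_cast; ring
  have hP1 : hsInner (b * a) (b * a) = ∑ i : Fin n, ∑ j : Fin n, ∑ k : Fin n, ∑ l : Fin n,
      a i j * starRingEnd ℂ (a k j) * b l i * starRingEnd ℂ (b l k) := by
    rw [hsInner_mul]
    rw [show (∑ r : Fin n, ∑ p : Fin n, ∑ s : Fin n, ∑ t : Fin n,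
          (starRingEnd ℂ) (b r s) * (starRingEnd ℂ) (a s p) * (b r t * a t p))
        = ∑ i : Fin n, ∑ j : Fin n, ∑ k : Fin n, ∑ l : Fin n,
          (starRingEnd ℂ) (b l k) * (starRingEnd ℂ) (a k j) * (b l i * a i j) from
      sum4_swap14 _]
    exact sum4_congr fun i j k l => by ring
  have hP4 : hsInner (a * b) (a * b) = ∑ i : Fin n, ∑ j : Fin n, ∑ k : Fin n, ∑ l : Fin n,
      a i j * starRingEnd ℂ (a i l) * b j k * starRingEnd ℂ (b l k) := by
    rw [hsInner_mul]
    rw [show (∑ r : Fin n, ∑ p : Fin n, ∑ s : Fin n, ∑ t : Fin n,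
          (starRingEnd ℂ) (a r s) * (starRingEnd ℂ) (b s p) * (a r t * b t p))
        = ∑ i : Fin n, ∑ j : Fin n, ∑ k : Fin n, ∑ l : Fin n,
          (starRingEnd ℂ) (a i l) * (starRingEnd ℂ) (b l k) * (a i j * b j k) from
      sum4_cycle _]
    exact sum4_congr fun i j k l => by ring
  have hP2 : hsInner (b * a) (a * b) = ∑ i : Fin n, ∑ j : Fin n, ∑ k : Fin n, ∑ l : Fin n,
      a i j * starRingEnd ℂ (a l k) * b j k * starRingEnd ℂ (b i l) := by
    rw [hsInner_mul]
    rw [show (∑ r : Fin n, ∑ p : Fin n, ∑ s : Fin n, ∑ t : Fin n,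
          (starRingEnd ℂ) (b r s) * (starRingEnd ℂ) (a s p) * (a r t * b t p))
        = ∑ i : Fin n, ∑ j : Fin n, ∑ k : Fin n, ∑ l : Fin n,
          (starRingEnd ℂ) (b i l) * (starRingEnd ℂ) (a l k) * (a i j * b j k) from
      sum4_cycle _]
    exact sum4_congr fun i j k l => by ring
  have hP3 : hsInner (a * b) (b * a) = ∑ i : Fin n, ∑ j : Fin n, ∑ k : Fin n, ∑ l : Fin n,
      starRingEnd ℂ (a i j) * a l k * starRingEnd ℂ (b j k) * b i l := by
    rw [hsInner_mul]
    rw [show (∑ r : Fin n, ∑ p : Fin n, ∑ s : Fin n, ∑ t : Fin n,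
          (starRingEnd ℂ) (a r s) * (starRingEnd ℂ) (b s p) * (b r t * a t p))
        = ∑ i : Fin n, ∑ j : Fin n, ∑ k : Fin n, ∑ l : Fin n,
          (starRingEnd ℂ) (a i j) * (starRingEnd ℂ) (b j k) * (b i l * a l k) from
      sum4_swap23 _]
    exact sum4_congr fun i j k l => by ring
  have hfc : ((fFun a b q : ℝ) : ℂ)
      = hsInner (b * a) (b * a) + (q : ℂ) * hsInner (a * b) (a * b)
        - ((1 + (q : ℂ)) / 2) * (hsInner (b * a) (a * b) + hsInner (a * b) (b * a)) := by
    have hT : hsInner (b * a - a * b) (b * a - (q : ℂ) • (a * b))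
        = hsInner (b * a) (b * a) - (q : ℂ) * hsInner (b * a) (a * b)
          - hsInner (a * b) (b * a) + (q : ℂ) * hsInner (a * b) (a * b) := by
      rw [hsInner_sub_left, hsInner_sub_right, hsInner_sub_right,
        hsInner_smul_right, hsInner_smul_right]
      ring
    have h2 : ((fFun a b q : ℝ) : ℂ)
        = (hsInner (b * a - a * b) (b * a - (q : ℂ) • (a * b))
            + (starRingEnd ℂ) (hsInner (b * a - a * b) (b * a - (q : ℂ) • (a * b)))) / 2 := by
      rw [show fFun a b q = (hsInner (b * a - a * b) (b * a - (q : ℂ) • (a * b))).re from rfl]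
      exact hre _
    rw [h2, hT]
    simp only [map_sub, map_add, _root_.map_mul, Complex.conj_ofReal, hsInner_conj]
    ring
  have hfc' : ((fFun a b q : ℝ) : ℂ)
      = (∑ i : Fin n, ∑ j : Fin n, ∑ k : Fin n, ∑ l : Fin n,
          a i j * starRingEnd ℂ (a k j) * b l i * starRingEnd ℂ (b l k))
        + (q : ℂ) * (∑ i : Fin n, ∑ j : Fin n, ∑ k : Fin n, ∑ l : Fin n,
          a i j * starRingEnd ℂ (a i l) * b j k * starRingEnd ℂ (b l k))
        - ((1 + (q : ℂ)) / 2) * ((∑ i : Fin n, ∑ j : Fin n, ∑ k : Fin n, ∑ l : Fin n,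
          a i j * starRingEnd ℂ (a l k) * b j k * starRingEnd ℂ (b i l)) + (∑ i : Fin n, ∑ j : Fin n, ∑ k : Fin n, ∑ l : Fin n,
          starRingEnd ℂ (a i j) * a l k * starRingEnd ℂ (b j k) * b i l)) := by
    rw [hfc, hP1, hP2, hP3, hP4]
  -- pointwise lemmas
  have pt0 : ∀ i j k l : Fin n, ((Complex.normSq (a i j) : ℝ) : ℂ) * ((Complex.normSq (b k l) : ℝ) : ℂ)
      = (if inD4 i j k l then ((Complex.normSq (a i j) : ℝ) : ℂ) * ((Complex.normSq (b k l) : ℝ) : ℂ) else 0)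
        + (if inD2 i j k l then ((Complex.normSq (a i j) : ℝ) : ℂ) * ((Complex.normSq (b k l) : ℝ) : ℂ) else 0)
        + (if inD3 i j k l then ((Complex.normSq (a i j) : ℝ) : ℂ) * ((Complex.normSq (b k l) : ℝ) : ℂ) else 0)
        + (if inD1 i j k l then ((Complex.normSq (a i j) : ℝ) : ℂ) * ((Complex.normSq (b k l) : ℝ) : ℂ) else 0) := by
    intro i j k l
    by_cases e1 : j = k <;> by_cases e2 : l = i <;> by_cases e3 : i = j <;> by_cases e4 : i = l <;>
      simp_all [inD1, inD2, inD3, inD4]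
  have hTot : ((frobSq a : ℝ) : ℂ) * ((frobSq b : ℝ) : ℂ)
      = (∑ i : Fin n, ∑ j : Fin n, ∑ k : Fin n, ∑ l : Fin n,
          if inD4 i j k l then ((Complex.normSq (a i j) : ℝ) : ℂ) * ((Complex.normSq (b k l) : ℝ) : ℂ) else 0)
        + (∑ i : Fin n, ∑ j : Fin n, ∑ k : Fin n, ∑ l : Fin n,
          if inD2 i j k l then ((Complex.normSq (a i j) : ℝ) : ℂ) * ((Complex.normSq (b k l) : ℝ) : ℂ) else 0)
        + (∑ i : Fin n, ∑ j : Fin n, ∑ k : Fin n, ∑ l : Fin n,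
          if inD3 i j k l then ((Complex.normSq (a i j) : ℝ) : ℂ) * ((Complex.normSq (b k l) : ℝ) : ℂ) else 0)
        + (∑ i : Fin n, ∑ j : Fin n, ∑ k : Fin n, ∑ l : Fin n,
          if inD1 i j k l then ((Complex.normSq (a i j) : ℝ) : ℂ) * ((Complex.normSq (b k l) : ℝ) : ℂ) else 0) := by
    rw [frobSq_cast, frobSq_cast]
    rw [show (∑ i : Fin n, ∑ j : Fin n, ((Complex.normSq (a i j) : ℝ) : ℂ))
          * (∑ k : Fin n, ∑ l : Fin n, ((Complex.normSq (b k l) : ℝ) : ℂ))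
        = ∑ i : Fin n, ∑ j : Fin n, ∑ k : Fin n, ∑ l : Fin n, ((Complex.normSq (a i j) : ℝ) : ℂ) * ((Complex.normSq (b k l) : ℝ) : ℂ) from by
      simp only [Finset.sum_mul, Finset.mul_sum]
      exact (sum4_swap_pairs (fun i j k l => ((Complex.normSq (a i j) : ℝ) : ℂ) * ((Complex.normSq (b k l) : ℝ) : ℂ))).symm]
    rw [sum4_congr pt0]
    simp only [Finset.sum_add_distrib]
  have pt1 : ∀ i j k l : Fin n, (if i ≠ k then a i j * starRingEnd ℂ (a k j) * b l i * starRingEnd ℂ (b l k) else 0)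
      = a i j * starRingEnd ℂ (a k j) * b l i * starRingEnd ℂ (b l k)
        - (if k = i then ((Complex.normSq (a i j) : ℝ) : ℂ) * ((Complex.normSq (b l i) : ℝ) : ℂ) else 0) := by
    intro i j k l
    by_cases h : i = k
    · subst h
      rw [if_neg (show ¬ i ≠ i from fun h' => h' rfl), if_pos rfl]
      have e1 : a i j * starRingEnd ℂ (a i j) * b l i * starRingEnd ℂ (b l i) = ((Complex.normSq (a i j) : ℝ) : ℂ) * ((Complex.normSq (b l i) : ℝ) : ℂ) := by
        calc a i j * starRingEnd ℂ (a i j) * b l i * starRingEnd ℂ (b l i)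
            = (a i j * starRingEnd ℂ (a i j)) * (b l i * starRingEnd ℂ (b l i)) := by ring
          _ = _ := by rw [Complex.mul_conj, Complex.mul_conj]
      rw [e1]; ring
    · rw [if_pos h, if_neg (fun hk => h hk.symm)]; ring
  have hS1 : (∑ i : Fin n, ∑ j : Fin n, ∑ k : Fin n, ∑ l : Fin n,
        if i ≠ k then a i j * starRingEnd ℂ (a k j) * b l i * starRingEnd ℂ (b l k) else 0)
      = (∑ i : Fin n, ∑ j : Fin n, ∑ k : Fin n, ∑ l : Fin n,
          a i j * starRingEnd ℂ (a k j) * b l i * starRingEnd ℂ (b l k))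
        - (∑ i : Fin n, ∑ j : Fin n, ∑ k : Fin n, ∑ l : Fin n,
          if k = i then ((Complex.normSq (a i j) : ℝ) : ℂ) * ((Complex.normSq (b l i) : ℝ) : ℂ) else 0) := by
    rw [sum4_congr pt1]
    simp only [Finset.sum_sub_distrib]
  have pt2 : ∀ i j k l : Fin n, (if j ≠ l then a i j * starRingEnd ℂ (a i l) * b j k * starRingEnd ℂ (b l k) else 0)
      = a i j * starRingEnd ℂ (a i l) * b j k * starRingEnd ℂ (b l k)
        - (if l = j then ((Complex.normSq (a i j) : ℝ) : ℂ) * ((Complex.normSq (b j k) : ℝ) : ℂ) else 0) := by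
    intro i j k l
    by_cases h : j = l
    · subst h
      rw [if_neg (show ¬ j ≠ j from fun h' => h' rfl), if_pos rfl]
      have e1 : a i j * starRingEnd ℂ (a i j) * b j k * starRingEnd ℂ (b j k) = ((Complex.normSq (a i j) : ℝ) : ℂ) * ((Complex.normSq (b j k) : ℝ) : ℂ) := by
        calc a i j * starRingEnd ℂ (a i j) * b j k * starRingEnd ℂ (b j k)
            = (a i j * starRingEnd ℂ (a i j)) * (b j k * starRingEnd ℂ (b j k)) := by ring
          _ = _ := by rw [Complex.mul_conj, Complex.mul_conj]
      rw [e1]; ring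
    · rw [if_pos h, if_neg (fun hk => h hk.symm)]; ring
  have hS2 : (∑ i : Fin n, ∑ j : Fin n, ∑ k : Fin n, ∑ l : Fin n,
        if j ≠ l then a i j * starRingEnd ℂ (a i l) * b j k * starRingEnd ℂ (b l k) else 0)
      = (∑ i : Fin n, ∑ j : Fin n, ∑ k : Fin n, ∑ l : Fin n,
          a i j * starRingEnd ℂ (a i l) * b j k * starRingEnd ℂ (b l k))
        - (∑ i : Fin n, ∑ j : Fin n, ∑ k : Fin n, ∑ l : Fin n,
          if l = j then ((Complex.normSq (a i j) : ℝ) : ℂ) * ((Complex.normSq (b j k) : ℝ) : ℂ) else 0) := by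
    rw [sum4_congr pt2]
    simp only [Finset.sum_sub_distrib]
  have pt3 : ∀ i j k l : Fin n,
      (if ¬ inD0 i j k l then (((a i j * starRingEnd ℂ (a l k) * b j k * starRingEnd ℂ (b i l)).re : ℝ) : ℂ) else 0)
      = (a i j * starRingEnd ℂ (a l k) * b j k * starRingEnd ℂ (b i l)) / 2 + (starRingEnd ℂ (a i j) * a l k * starRingEnd ℂ (b j k) * b i l) / 2
        - (if inD0 i j k l then ((Complex.normSq (a i j) : ℝ) : ℂ) * ((Complex.normSq (b k l) : ℝ) : ℂ) else 0) := by
    intro i j k l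
    by_cases h0 : inD0 i j k l
    · have h0' := h0
      obtain ⟨rfl, rfl, rfl⟩ : i = j ∧ j = k ∧ k = l := h0
      rw [if_neg (not_not_intro h0'), if_pos h0']
      have e1 : a i i * starRingEnd ℂ (a i i) * b i i * starRingEnd ℂ (b i i)
          = ((Complex.normSq (a i i) : ℝ) : ℂ) * ((Complex.normSq (b i i) : ℝ) : ℂ) := by
        calc a i i * starRingEnd ℂ (a i i) * b i i * starRingEnd ℂ (b i i)
            = (a i i * starRingEnd ℂ (a i i)) * (b i i * starRingEnd ℂ (b i i)) := by ring
          _ = _ := by rw [Complex.mul_conj, Complex.mul_conj]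
      have e2 : starRingEnd ℂ (a i i) * a i i * starRingEnd ℂ (b i i) * b i i
          = ((Complex.normSq (a i i) : ℝ) : ℂ) * ((Complex.normSq (b i i) : ℝ) : ℂ) := by
        rw [← e1]; ring
      rw [e1, e2]; ring
    · rw [if_pos h0, if_neg h0]
      rw [hre (a i j * starRingEnd ℂ (a l k) * b j k * starRingEnd ℂ (b i l))]
      have e3 : (starRingEnd ℂ) (a i j * starRingEnd ℂ (a l k) * b j k * starRingEnd ℂ (b i l)) = starRingEnd ℂ (a i j) * a l k * starRingEnd ℂ (b j k) * b i l := by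
        simp only [_root_.map_mul, Complex.conj_conj]
      rw [e3]; ring
  have hS3 : (∑ i : Fin n, ∑ j : Fin n, ∑ k : Fin n, ∑ l : Fin n,
        if ¬ inD0 i j k l then (((a i j * starRingEnd ℂ (a l k) * b j k * starRingEnd ℂ (b i l)).re : ℝ) : ℂ) else 0)
      = ((∑ i : Fin n, ∑ j : Fin n, ∑ k : Fin n, ∑ l : Fin n,
          a i j * starRingEnd ℂ (a l k) * b j k * starRingEnd ℂ (b i l)) + (∑ i : Fin n, ∑ j : Fin n, ∑ k : Fin n, ∑ l : Fin n,
          starRingEnd ℂ (a i j) * a l k * starRingEnd ℂ (b j k) * b i l)) / 2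
        - (∑ i : Fin n, ∑ j : Fin n, ∑ k : Fin n, ∑ l : Fin n,
          if inD0 i j k l then ((Complex.normSq (a i j) : ℝ) : ℂ) * ((Complex.normSq (b k l) : ℝ) : ℂ) else 0) := by
    rw [sum4_congr pt3]
    simp only [Finset.sum_add_distrib, Finset.sum_sub_distrib, ← Finset.sum_div]
    ring
  have hD2 : (∑ i : Fin n, ∑ j : Fin n, ∑ k : Fin n, ∑ l : Fin n,
          if inD2 i j k l then ((Complex.normSq (a i j) : ℝ) : ℂ) * ((Complex.normSq (b k l) : ℝ) : ℂ) else 0)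
      = (∑ i : Fin n, ∑ j : Fin n, ∑ k : Fin n, ∑ l : Fin n,
          if k = i then ((Complex.normSq (a i j) : ℝ) : ℂ) * ((Complex.normSq (b l i) : ℝ) : ℂ) else 0)
        - (∑ i : Fin n, ∑ j : Fin n, ∑ k : Fin n, ∑ l : Fin n,
          if j = k ∧ i = l then ((Complex.normSq (a i j) : ℝ) : ℂ) * ((Complex.normSq (b k l) : ℝ) : ℂ) else 0) := by
    rw [sum4_congr (pt4 a b)]
    simp only [Finset.sum_sub_distrib]
    rw [show (∑ i : Fin n, ∑ j : Fin n, ∑ k : Fin n, ∑ l : Fin n,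
          if l = i then ((Complex.normSq (a i j) : ℝ) : ℂ) * ((Complex.normSq (b k i) : ℝ) : ℂ) else 0)
        = ∑ i : Fin n, ∑ j : Fin n, ∑ k : Fin n, ∑ l : Fin n,
          if k = i then ((Complex.normSq (a i j) : ℝ) : ℂ) * ((Complex.normSq (b l i) : ℝ) : ℂ) else 0 from
      sum4_swap34 (fun i j k l =>
        if l = i then ((Complex.normSq (a i j) : ℝ) : ℂ) * ((Complex.normSq (b k i) : ℝ) : ℂ) else 0)]
  have hD3 : (∑ i : Fin n, ∑ j : Fin n, ∑ k : Fin n, ∑ l : Fin n,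
          if inD3 i j k l then ((Complex.normSq (a i j) : ℝ) : ℂ) * ((Complex.normSq (b k l) : ℝ) : ℂ) else 0)
      = (∑ i : Fin n, ∑ j : Fin n, ∑ k : Fin n, ∑ l : Fin n,
          if l = j then ((Complex.normSq (a i j) : ℝ) : ℂ) * ((Complex.normSq (b j k) : ℝ) : ℂ) else 0)
        - (∑ i : Fin n, ∑ j : Fin n, ∑ k : Fin n, ∑ l : Fin n,
          if j = k ∧ i = l then ((Complex.normSq (a i j) : ℝ) : ℂ) * ((Complex.normSq (b k l) : ℝ) : ℂ) else 0) := by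
    rw [sum4_congr (pt5 a b)]
    simp only [Finset.sum_sub_distrib]
    rw [show (∑ i : Fin n, ∑ j : Fin n, ∑ k : Fin n, ∑ l : Fin n,
          if k = j then ((Complex.normSq (a i j) : ℝ) : ℂ) * ((Complex.normSq (b j l) : ℝ) : ℂ) else 0)
        = ∑ i : Fin n, ∑ j : Fin n, ∑ k : Fin n, ∑ l : Fin n,
          if l = j then ((Complex.normSq (a i j) : ℝ) : ℂ) * ((Complex.normSq (b j k) : ℝ) : ℂ) else 0 from
      sum4_swap34 (fun i j k l =>
        if k = j then ((Complex.normSq (a i j) : ℝ) : ℂ) * ((Complex.normSq (b j l) : ℝ) : ℂ) else 0)]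
  have hD1 : (∑ i : Fin n, ∑ j : Fin n, ∑ k : Fin n, ∑ l : Fin n,
          if inD1 i j k l then ((Complex.normSq (a i j) : ℝ) : ℂ) * ((Complex.normSq (b k l) : ℝ) : ℂ) else 0)
      = (∑ i : Fin n, ∑ j : Fin n, ∑ k : Fin n, ∑ l : Fin n,
          if j = k ∧ i = l then ((Complex.normSq (a i j) : ℝ) : ℂ) * ((Complex.normSq (b k l) : ℝ) : ℂ) else 0)
        - (∑ i : Fin n, ∑ j : Fin n, ∑ k : Fin n, ∑ l : Fin n,
          if inD0 i j k l then ((Complex.normSq (a i j) : ℝ) : ℂ) * ((Complex.normSq (b k l) : ℝ) : ℂ) else 0) := by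
    rw [sum4_congr (pt6 a b)]
    simp only [Finset.sum_sub_distrib]
  rw [hfc', hS1, hS2, hS3]
  rw [hD1, hD2, hD3] at hTot ⊢
  linear_combination ((cq q : ℝ) : ℂ) * hTot
end
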